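/- Refined recurrence singling out one prime: let n ≥ 2 be a natural number, let p₁ be a prime dividing n, and let n₁ be the multiplicity of p₁ in n. Then in ℚ: p*(n) · n₁ = ∑_{d ∣ n, p₁ ∣ d} r₁(d) · λ(d) · p*(n / d), where r₁(d) denotes the multiplicity of p₁ in d, c(d) is the greatest common divisor of the exponents appearing in the prime factorization of d, and λ(d) = ∑_{i ∣ c(d)} 1/i. -/

import Mathlib

noncomputable def numFactorizations (m : ℕ) : ℕ :=
  Nat.card {s : Multiset ℕ // (∀ x ∈ s, 2 ≤ x) ∧ s.prod = m}

def expGcd (d : ℕ) : ℕ :=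
  d.primeFactors.gcd fun p => d.factorization p

noncomputable def lam (d : ℕ) : ℚ :=
  ∑ i ∈ (expGcd d).divisors, (1 : ℚ) / i

open scoped Classical

lemma fact_card_le {m : ℕ} {s : Multiset ℕ} (h1 : ∀ x ∈ s, 2 ≤ x)
    (h2 : s.prod = m) : Multiset.card s ≤ m := by
  have h3 : 2 ^ Multiset.card s ≤ s.prod := Multiset.pow_card_le_prod h1
  have h4 : Multiset.card s < 2 ^ Multiset.card s := Nat.lt_two_pow_self
  omega

lemma fact_mem_le {m : ℕ} (hm : 1 ≤ m) {s : Multiset ℕ} (h2 : s.prod = m) :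
    ∀ x ∈ s, x ≤ m := fun _ hx =>
  Nat.le_of_dvd hm (h2 ▸ Multiset.dvd_prod hx)

noncomputable def factFinset (m : ℕ) : Finset (Multiset ℕ) :=
  ((m • Multiset.range (m + 1)).powerset.toFinset).filter
    (fun s => (∀ x ∈ s, 2 ≤ x) ∧ s.prod = m)

lemma mem_factFinset {m : ℕ} (hm : 1 ≤ m) {s : Multiset ℕ} :
    s ∈ factFinset m ↔ (∀ x ∈ s, 2 ≤ x) ∧ s.prod = m := by
  unfold factFinset
  rw [Finset.mem_filter, Multiset.mem_toFinset, Multiset.mem_powerset]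
  constructor
  · exact fun h => h.2
  · rintro ⟨h1, h2⟩
    refine ⟨Multiset.le_iff_count.2 fun a => ?_, h1, h2⟩
    rcases Nat.eq_zero_or_pos (s.count a) with h | h
    · simp [h]
    · have ha : a ∈ s := Multiset.count_pos.1 h
      have ha1 : a ≤ m := fact_mem_le hm h2 a ha
      have hc : s.count a ≤ Multiset.card s := Multiset.count_le_card a s
      have hcard := fact_card_le h1 h2
      rw [Multiset.count_nsmul, Multiset.range, Multiset.coe_count,
        List.count_eq_one_of_mem (List.nodup_range) (by simp; omega)]
      omega

lemma numFact_eq {m : ℕ} (hm : 1 ≤ m) : numFactorizations m = (factFinset m).card := by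
  rw [numFactorizations, ← Nat.card_eq_finsetCard]
  exact Nat.card_congr (Equiv.subtypeEquivRight fun s => ((mem_factFinset hm).symm))

lemma multiset_prod_factorization (s : Multiset ℕ) (h : ∀ x ∈ s, 2 ≤ x) (p : ℕ) :
    (s.prod).factorization p = (s.map (fun x => x.factorization p)).sum := by
  induction s using Multiset.induction with
  | empty => simp
  | cons a t ih =>
    have ha : a ≠ 0 := by have := h a (Multiset.mem_cons_self a t); omega
    have ht : t.prod ≠ 0 := by
      refine Multiset.prod_ne_zero ?_
      intro h0
      have := h 0 (Multiset.mem_cons_of_mem h0); omega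
    rw [Multiset.prod_cons, Nat.factorization_mul ha ht, Multiset.map_cons, Multiset.sum_cons]
    simp only [Finsupp.add_apply]
    rw [ih (fun x hx => h x (Multiset.mem_cons_of_mem hx))]

lemma card_filter_count (n m k : ℕ) (hn : 1 ≤ n) (hm : 2 ≤ m) (hk : 1 ≤ k)
    (hdvd : m ^ k ∣ n) :
    ((factFinset n).filter (fun s => k ≤ s.count m)).card = (factFinset (n / m ^ k)).card := by
  have hmk : 0 < m ^ k := pow_pos (by omega) k
  have hq : 1 ≤ n / m ^ k := Nat.one_le_div_iff hmk |>.2 (Nat.le_of_dvd hn hdvd)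
  refine Finset.card_bij' (fun s _ => s - Multiset.replicate k m)
    (fun t _ => t + Multiset.replicate k m) ?_ ?_ ?_ ?_
  · intro s hs
    rw [Finset.mem_filter, mem_factFinset hn] at hs
    obtain ⟨⟨h1, h2⟩, hcount⟩ := hs
    have hle : Multiset.replicate k m ≤ s := by
      rw [Multiset.le_iff_count]
      intro a
      rw [Multiset.count_replicate]
      split
      · next h => subst h; exact hcount
      · omega
    rw [mem_factFinset hq]
    constructor
    · intro x hx
      exact h1 x (Multiset.mem_of_le tsub_le_self hx)
    · have : (s - Multiset.replicate k m).prod * m ^ k = n := by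
        rw [← h2, ← Multiset.prod_replicate]
        rw [← Multiset.prod_add, tsub_add_cancel_of_le hle]
      rw [Nat.div_eq_of_eq_mul_left hmk this.symm]
  · intro t ht
    rw [mem_factFinset hq] at ht
    obtain ⟨h1, h2⟩ := ht
    rw [Finset.mem_filter, mem_factFinset hn]
    refine ⟨⟨?_, ?_⟩, ?_⟩
    · intro x hx
      rcases Multiset.mem_add.1 hx with h | h
      · exact h1 x h
      · rw [Multiset.eq_of_mem_replicate h]; exact hm
    · rw [Multiset.prod_add, h2, Multiset.prod_replicate, Nat.div_mul_cancel hdvd]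
    · rw [Multiset.count_add, Multiset.count_replicate, if_pos rfl]; omega
  · intro s hs
    rw [Finset.mem_filter, mem_factFinset hn] at hs
    have hle : Multiset.replicate k m ≤ s := by
      rw [Multiset.le_iff_count]
      intro a
      rw [Multiset.count_replicate]
      split
      · next h => subst h; exact hs.2
      · omega
    exact tsub_add_cancel_of_le hle
  · intro t _
    exact add_tsub_cancel_right _ _

def rootk (d k : ℕ) : ℕ := ∏ p ∈ d.primeFactors, p ^ (d.factorization p / k)

lemma prod_primeFactors_pow (d : ℕ) (hd : d ≠ 0) :
    ∏ p ∈ d.primeFactors, p ^ d.factorization p = d := by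
  conv_rhs => rw [← Nat.factorization_prod_pow_eq_self hd]
  rw [Finsupp.prod, Nat.support_factorization]

lemma expGcd_dvd {d : ℕ} {p : ℕ} (hp : p ∈ d.primeFactors) : expGcd d ∣ d.factorization p :=
  Finset.gcd_dvd hp

lemma expGcd_ne_zero {d : ℕ} (hd : 2 ≤ d) : expGcd d ≠ 0 := by
  intro h
  obtain ⟨p, hp⟩ := (Nat.nonempty_primeFactors.2 hd).exists_mem
  have h0 := Finset.gcd_eq_zero_iff.1 h p hp
  exact (Nat.Prime.factorization_pos_of_dvd (Nat.prime_of_mem_primeFactors hp)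
    (by omega) (Nat.dvd_of_mem_primeFactors hp)).ne' h0

lemma rootk_pow {d k : ℕ} (hd : d ≠ 0) (hdvd : k ∣ expGcd d) :
    (rootk d k) ^ k = d := by
  rw [rootk, ← Finset.prod_pow]
  conv_rhs => rw [← prod_primeFactors_pow d hd]
  refine Finset.prod_congr rfl fun p hp => ?_
  rw [← pow_mul, Nat.div_mul_cancel (hdvd.trans (expGcd_dvd hp))]

lemma rootk_pow_self {m k : ℕ} (hm : m ≠ 0) (hk : k ≠ 0) : rootk (m ^ k) k = m := by
  rw [rootk, Nat.primeFactors_pow m hk]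
  conv_rhs => rw [← prod_primeFactors_pow m hm]
  refine Finset.prod_congr rfl fun p hp => ?_
  rw [Nat.factorization_pow]
  simp only [Finsupp.smul_apply, smul_eq_mul]
  rw [Nat.mul_div_cancel_left _ (Nat.pos_of_ne_zero hk)]

lemma expGcd_pow_dvd {m k : ℕ} (hk : k ≠ 0) : k ∣ expGcd (m ^ k) := by
  rw [expGcd, Nat.primeFactors_pow m hk]
  refine Finset.dvd_gcd fun p hp => ?_
  rw [Nat.factorization_pow]
  simp only [Finsupp.smul_apply, smul_eq_mul]
  exact Dvd.intro _ rfl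


lemma rootk_facts {n p₁ d k : ℕ} (hn : 2 ≤ n) (hp₁ : p₁.Prime) (hd : d ∣ n)
    (hpd : p₁ ∣ d) (hk : k ∣ expGcd d) (hkne : k ≠ 0) :
    2 ≤ rootk d k ∧ rootk d k ≤ n ∧ k ≤ n ∧ (rootk d k) ^ k = d ∧ p₁ ∣ rootk d k ∧
      d.factorization p₁ = k * (rootk d k).factorization p₁ := by
  have hn0 : n ≠ 0 := by omega
  have hd0 : d ≠ 0 := by rintro rfl; exact hn0 (zero_dvd_iff.1 hd)
  have hd2 : 2 ≤ d := le_trans hp₁.two_le (Nat.le_of_dvd (Nat.pos_of_ne_zero hd0) hpd)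
  set m := rootk d k with hm
  have hmk : m ^ k = d := rootk_pow hd0 hk
  have hm0 : m ≠ 0 := by rintro h; rw [h, zero_pow hkne] at hmk; omega
  have hm1 : m ≠ 1 := by rintro h; rw [h, one_pow] at hmk; omega
  have hm2 : 2 ≤ m := by omega
  have hmn : m ≤ n := Nat.le_of_dvd (by omega) ((dvd_pow_self m hkne).trans (hmk ▸ hd))
  have hpmem : p₁ ∈ d.primeFactors := Nat.mem_primeFactors.2 ⟨hp₁, hpd, hd0⟩
  have he : expGcd d ∣ d.factorization p₁ := expGcd_dvd hpmem
  have he0 : d.factorization p₁ ≠ 0 := (hp₁.factorization_pos_of_dvd hd0 hpd).ne'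
  have hgcd0 : expGcd d ≠ 0 := expGcd_ne_zero hd2
  have hkle : k ≤ d.factorization p₁ :=
    le_trans (Nat.le_of_dvd (Nat.pos_of_ne_zero hgcd0) hk)
      (Nat.le_of_dvd (Nat.pos_of_ne_zero he0) he)
  have hen : d.factorization p₁ ≤ n := by
    have h1 : p₁ ^ d.factorization p₁ ∣ d := Nat.ordProj_dvd d p₁
    have h2 : p₁ ^ d.factorization p₁ ≤ n := Nat.le_of_dvd (by omega) (h1.trans hd)
    have h3 : 2 ^ d.factorization p₁ ≤ p₁ ^ d.factorization p₁ :=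
      Nat.pow_le_pow_left hp₁.two_le _
    have h4 : d.factorization p₁ < 2 ^ d.factorization p₁ := Nat.lt_two_pow_self
    omega
  have hfact : d.factorization p₁ = k * m.factorization p₁ := by
    conv_lhs => rw [← hmk]
    rw [Nat.factorization_pow]
    simp
  have hpm : p₁ ∣ m := by
    by_contra hcon
    rw [Nat.factorization_eq_zero_of_not_dvd hcon] at hfact
    omega
  exact ⟨hm2, hmn, by omega, hmk, hpm, hfact⟩

/-- Refined recurrence singling out one prime: for `n ≥ 2`, a
prime `p₁ ∣ n` with multiplicity `n₁`,
`p*(n) · n₁ = ∑_{d ∣ n, p₁ ∣ d} r₁(d) · λ(d) · p*(n / d)` in `ℚ`, where `r₁(d)` is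
the multiplicity of `p₁` in `d`. -/
theorem stmt10 (n : ℕ) (hn : 2 ≤ n) (p₁ : ℕ) (hp₁ : p₁.Prime) (hdvd : p₁ ∣ n)
    (n₁ : ℕ) (hn₁ : n₁ = n.factorization p₁) :
    (numFactorizations n : ℚ) * (n₁ : ℚ) =
      ∑ d ∈ n.divisors.filter (p₁ ∣ ·),
        (d.factorization p₁ : ℚ) * lam d * numFactorizations (n / d) := by
  subst hn₁
  have hn0 : n ≠ 0 := by omega
  have hn1 : (1 : ℕ) ≤ n := by omega
  set F := factFinset n with hF
  set B : Finset (ℕ × ℕ) := ((Finset.Icc 2 n) ×ˢ (Finset.Icc 1 n)).filter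
    (fun q => q.1 ^ q.2 ∣ n ∧ p₁ ∣ q.1) with hB
  -- common middle expression
  have key : (numFactorizations n : ℚ) * (n.factorization p₁ : ℚ)
      = ∑ q ∈ B, (q.1.factorization p₁ : ℚ) * ((factFinset (n / q.1 ^ q.2)).card : ℚ) := by
    have count_expand : ∀ c : ℕ, c ≤ n →
        (c : ℚ) = ∑ k ∈ Finset.Icc 1 n, if k ≤ c then (1 : ℚ) else 0 := by
      intro c hc
      rw [Finset.sum_boole]
      have : (Finset.Icc 1 n).filter (fun k => k ≤ c) = Finset.Icc 1 c := by
        ext x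
        simp only [Finset.mem_filter, Finset.mem_Icc]
        omega
      rw [this, Nat.card_Icc]
      norm_num
    have step2 : ∀ s ∈ F, (n.factorization p₁ : ℚ)
        = ∑ m ∈ Finset.Icc 2 n, (s.count m : ℚ) * (m.factorization p₁ : ℚ) := by
      intro s hs
      rw [mem_factFinset hn1] at hs
      obtain ⟨h1, h2⟩ := hs
      have hnat : n.factorization p₁
          = ∑ m ∈ Finset.Icc 2 n, s.count m * m.factorization p₁ := by
        conv_lhs => rw [← h2, multiset_prod_factorization s h1]
        rw [Finset.sum_multiset_map_count]
        refine Finset.sum_subset ?_ ?_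
        · intro x hx
          rw [Multiset.mem_toFinset] at hx
          exact Finset.mem_Icc.2 ⟨h1 x hx, fact_mem_le hn1 h2 x hx⟩
        · intro x _ hx
          rw [Multiset.mem_toFinset] at hx
          simp [Multiset.count_eq_zero_of_notMem hx]
      rw [hnat]
      push_cast
      rfl
    have count_le : ∀ s ∈ F, ∀ m : ℕ, s.count m ≤ n := by
      intro s hs m
      rw [mem_factFinset hn1] at hs
      exact le_trans (Multiset.count_le_card m s) (fact_card_le hs.1 hs.2)
    calc (numFactorizations n : ℚ) * (n.factorization p₁ : ℚ)
        = ∑ _s ∈ F, (n.factorization p₁ : ℚ) := by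
          rw [numFact_eq hn1, ← hF, Finset.sum_const, nsmul_eq_mul]
      _ = ∑ s ∈ F, ∑ m ∈ Finset.Icc 2 n, ∑ k ∈ Finset.Icc 1 n,
            (if k ≤ s.count m then (1 : ℚ) else 0) * (m.factorization p₁ : ℚ) := by
          refine Finset.sum_congr rfl fun s hs => ?_
          rw [step2 s hs]
          refine Finset.sum_congr rfl fun m _ => ?_
          rw [count_expand (s.count m) (count_le s hs m), Finset.sum_mul]
      _ = ∑ m ∈ Finset.Icc 2 n, ∑ k ∈ Finset.Icc 1 n,
            (m.factorization p₁ : ℚ) * ((F.filter fun s => k ≤ s.count m).card : ℚ) := by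
          rw [Finset.sum_comm]
          refine Finset.sum_congr rfl fun m _ => ?_
          rw [Finset.sum_comm]
          refine Finset.sum_congr rfl fun k _ => ?_
          rw [← Finset.sum_mul, Finset.sum_boole, mul_comm]
      _ = ∑ q ∈ (Finset.Icc 2 n) ×ˢ (Finset.Icc 1 n),
            (q.1.factorization p₁ : ℚ) * ((F.filter fun s => q.2 ≤ s.count q.1).card : ℚ) := by
          rw [Finset.sum_product]
      _ = ∑ q ∈ B,
            (q.1.factorization p₁ : ℚ) * ((F.filter fun s => q.2 ≤ s.count q.1).card : ℚ) := by
          refine (Finset.sum_filter_of_ne ?_).symm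
          rintro ⟨m, k⟩ hq hne
          simp only at hne ⊢
          constructor
          · by_contra hndvd
            refine hne ?_
            have : (F.filter fun s => k ≤ s.count m) = ∅ := by
              refine Finset.filter_eq_empty_iff.2 fun s hs => ?_
              intro hk
              rw [mem_factFinset hn1] at hs
              refine hndvd ?_
              have hle : Multiset.replicate k m ≤ s := by
                rw [Multiset.le_iff_count]
                intro a
                rw [Multiset.count_replicate]
                split
                · next h => subst h; exact hk
                · omega
              have := Multiset.prod_dvd_prod_of_le hle
              rwa [Multiset.prod_replicate, hs.2] at this
            rw [this]
            simp
          · by_contra hp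
            refine hne ?_
            rw [Nat.factorization_eq_zero_of_not_dvd hp]
            simp
      _ = ∑ q ∈ B, (q.1.factorization p₁ : ℚ) * ((factFinset (n / q.1 ^ q.2)).card : ℚ) := by
          refine Finset.sum_congr rfl fun q hq => ?_
          rw [hB, Finset.mem_filter, Finset.mem_product, Finset.mem_Icc, Finset.mem_Icc] at hq
          obtain ⟨⟨hm, hk⟩, hdq, hpq⟩ := hq
          rw [card_filter_count n q.1 q.2 hn1 hm.1 hk.1 hdq]
  rw [key]
  -- now transform the RHS of the statement into the same sum
  have rhs : ∑ d ∈ n.divisors.filter (p₁ ∣ ·),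
        (d.factorization p₁ : ℚ) * lam d * (numFactorizations (n / d) : ℚ)
      = ∑ q ∈ B, (q.1.factorization p₁ : ℚ) * ((factFinset (n / q.1 ^ q.2)).card : ℚ) := by
    have step1 : ∑ d ∈ n.divisors.filter (p₁ ∣ ·),
          (d.factorization p₁ : ℚ) * lam d * (numFactorizations (n / d) : ℚ)
        = ∑ d ∈ n.divisors.filter (p₁ ∣ ·), ∑ k ∈ (expGcd d).divisors,
            (d.factorization p₁ : ℚ) * ((1 : ℚ) / k) * ((factFinset (n / d)).card : ℚ) := by
      refine Finset.sum_congr rfl fun d hd => ?_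
      rw [Finset.mem_filter, Nat.mem_divisors] at hd
      have hd0 : d ≠ 0 := by rintro rfl; exact hn0 (zero_dvd_iff.1 hd.1.1)
      have hq1 : (1 : ℕ) ≤ n / d :=
        (Nat.one_le_div_iff (Nat.pos_of_ne_zero hd0)).2 (Nat.le_of_dvd (by omega) hd.1.1)
      rw [numFact_eq hq1, lam, Finset.mul_sum, Finset.sum_mul]
    rw [step1, Finset.sum_sigma']
    refine Finset.sum_bij' (fun x _ => ((rootk x.1 x.2, x.2) : ℕ × ℕ))
      (fun q _ => (⟨q.1 ^ q.2, q.2⟩ : (_ : ℕ) × ℕ)) ?_ ?_ ?_ ?_ ?_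
    · rintro ⟨d, k⟩ ha
      dsimp only at ha ⊢
      rw [Finset.mem_sigma, Finset.mem_filter, Nat.mem_divisors, Nat.mem_divisors] at ha
      obtain ⟨⟨⟨hdn, _⟩, hpd⟩, hkg, hg0⟩ := ha
      dsimp only at *
      obtain ⟨hm2, hmn, hkn, hmk, hpm, _⟩ :=
        rootk_facts hn hp₁ hdn hpd hkg (fun h => hg0 (zero_dvd_iff.1 (h ▸ hkg)))
      have hkne : k ≠ 0 := fun h => hg0 (zero_dvd_iff.1 (h ▸ hkg))
      rw [hB, Finset.mem_filter, Finset.mem_product, Finset.mem_Icc, Finset.mem_Icc]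
      exact ⟨⟨⟨hm2, hmn⟩, by omega, hkn⟩, by rw [hmk]; exact hdn, hpm⟩
    · rintro ⟨m, k⟩ hq
      dsimp only at hq ⊢
      rw [hB, Finset.mem_filter, Finset.mem_product, Finset.mem_Icc, Finset.mem_Icc] at hq
      obtain ⟨⟨⟨hm2, hmn⟩, hk1, hkn⟩, hdn, hpm⟩ := hq
      dsimp only at *
      have hkne : k ≠ 0 := by omega
      rw [Finset.mem_sigma, Finset.mem_filter, Nat.mem_divisors]
      refine ⟨⟨⟨hdn, hn0⟩, hpm.trans (dvd_pow_self m hkne)⟩, ?_⟩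
      rw [Nat.mem_divisors]
      exact ⟨expGcd_pow_dvd hkne,
        expGcd_ne_zero (le_trans hm2 (Nat.le_self_pow hkne m))⟩
    · rintro ⟨d, k⟩ ha
      dsimp only at ha ⊢
      rw [Finset.mem_sigma, Finset.mem_filter, Nat.mem_divisors, Nat.mem_divisors] at ha
      obtain ⟨⟨⟨hdn, _⟩, hpd⟩, hkg, hg0⟩ := ha
      dsimp only at *
      obtain ⟨_, _, _, hmk, _, _⟩ :=
        rootk_facts hn hp₁ hdn hpd hkg (fun h => hg0 (zero_dvd_iff.1 (h ▸ hkg)))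
      simp only [hmk]
    · rintro ⟨m, k⟩ hq
      dsimp only at hq ⊢
      rw [hB, Finset.mem_filter, Finset.mem_product, Finset.mem_Icc, Finset.mem_Icc] at hq
      obtain ⟨⟨⟨hm2, hmn⟩, hk1, hkn⟩, hdn, hpm⟩ := hq
      dsimp only at *
      simp only [rootk_pow_self (by omega : m ≠ 0) (by omega : k ≠ 0)]
    · rintro ⟨d, k⟩ ha
      dsimp only at ha ⊢
      rw [Finset.mem_sigma, Finset.mem_filter, Nat.mem_divisors, Nat.mem_divisors] at ha
      obtain ⟨⟨⟨hdn, _⟩, hpd⟩, hkg, hg0⟩ := ha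
      dsimp only at *
      have hkne : k ≠ 0 := fun h => hg0 (zero_dvd_iff.1 (h ▸ hkg))
      obtain ⟨hm2, hmn, hkn, hmk, hpm, hfact⟩ := rootk_facts hn hp₁ hdn hpd hkg hkne
      have h1 : (d.factorization p₁ : ℚ) = (k : ℚ) * ((rootk d k).factorization p₁ : ℚ) := by
        exact_mod_cast congrArg (Nat.cast : ℕ → ℚ) hfact
      rw [hmk, h1]
      have hkQ : (k : ℚ) ≠ 0 := Nat.cast_ne_zero.2 hkne
      field_simp
  rw [rhs]
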